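/- Let X be a real Banach space, n a positive integer, and N a monotonous norm on ℝ^n. Every weakly compact subset W of X is N-simultaneously proximinal in X; that is, for every x_1, …, x_n ∈ X there exists w_0 ∈ W such that N(‖x_1 − w_0‖, …, ‖x_n − w_0‖) ≤ N(‖x_1 − w‖, …, ‖x_n − w‖) for all w ∈ W. -/

import Mathlib

open Filter

/-- Every (nonempty) weakly compact subset of a real Banach space is
`N`-simultaneously proximinal for any monotonous norm `N` on `ℝ^n`. -/
theorem weakly_compact_N_simultaneously_proximinal
    {X : Type*} [NormedAddCommGroup X] [NormedSpace ℝ X] [CompleteSpace X]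
    (n : ℕ) (hn : 0 < n)
    (N : (Fin n → ℝ) → ℝ)
    (hN_eq_zero : ∀ t : Fin n → ℝ, N t = 0 ↔ t = 0)
    (hN_smul : ∀ (a : ℝ) (t : Fin n → ℝ), N (a • t) = |a| * N t)
    (hN_add : ∀ t s : Fin n → ℝ, N (t + s) ≤ N t + N s)
    (hN_mono : ∀ t s : Fin n → ℝ, (∀ i, |t i| ≤ |s i|) → N t ≤ N s)
    (W : Set X) (hW_ne : W.Nonempty)
    (hW : IsCompact (toWeakSpace ℝ X '' W))
    (x : Fin n → X) :
    ∃ w₀ ∈ W, ∀ w ∈ W,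
      N (fun i => ‖x i - w₀‖) ≤ N (fun i => ‖x i - w‖) := by
  classical
  set e := toWeakSpace ℝ X with he
  -- basic facts about N
  have hN0 : N 0 = 0 := (hN_eq_zero 0).mpr rfl
  have hN_neg : ∀ t, N (-t) = N t := by
    intro t
    have := hN_smul (-1) t
    simpa using this
  have hN_nonneg : ∀ t, 0 ≤ N t := by
    intro t
    have h := hN_add t (-t)
    rw [add_neg_cancel, hN0, hN_neg] at h
    linarith
  -- N is Lipschitz, hence continuous
  set C : ℝ := ∑ i : Fin n, N (Pi.single i 1) with hC
  have hC_nonneg : 0 ≤ C := Finset.sum_nonneg fun i _ => hN_nonneg _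
  have hN_le : ∀ t : Fin n → ℝ, N t ≤ C * ‖t‖ := by
    intro t
    have ht : t = ∑ i : Fin n, t i • (Pi.single i 1 : Fin n → ℝ) := by
      ext j
      simp [Finset.sum_apply, Pi.single_apply, mul_comm]
    calc N t = N (∑ i : Fin n, t i • (Pi.single i 1 : Fin n → ℝ)) := by rw [← ht]
      _ ≤ ∑ i : Fin n, N (t i • (Pi.single i 1 : Fin n → ℝ)) :=
          Finset.le_sum_of_subadditive N hN0.le hN_add _ _
      _ = ∑ i : Fin n, |t i| * N (Pi.single i 1) := by
          simp only [hN_smul]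
      _ ≤ ∑ i : Fin n, ‖t‖ * N (Pi.single i 1) := by
          refine Finset.sum_le_sum fun i _ => ?_
          exact mul_le_mul_of_nonneg_right
            (by simpa using norm_le_pi_norm t i) (hN_nonneg _)
      _ = C * ‖t‖ := by rw [← Finset.mul_sum, mul_comm]
  have hN_cont : Continuous N := by
    rw [Metric.continuous_iff]
    intro t ε hε
    by_cases hCpos : C = 0
    · exact ⟨1, one_pos, fun s _ => by
        have h1 : N s ≤ 0 := by simpa [hCpos] using hN_le s
        have h2 : N t ≤ 0 := by simpa [hCpos] using hN_le t
        have h1' := hN_nonneg s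
        have h2' := hN_nonneg t
        simp [Real.dist_eq, le_antisymm h1 h1', le_antisymm h2 h2', hε]⟩
    · have hCpos' : 0 < C := lt_of_le_of_ne hC_nonneg (Ne.symm hCpos)
      refine ⟨ε / C, by positivity, fun s hs => ?_⟩
      have key : ∀ a b : Fin n → ℝ, N a - N b ≤ C * ‖a - b‖ := by
        intro a b
        have h := hN_add (a - b) b
        rw [sub_add_cancel] at h
        have := hN_le (a - b)
        linarith
      have h1 := key s t
      have h2 := key t s
      rw [Real.dist_eq]
      rw [dist_eq_norm] at hs
      have hts : ‖t - s‖ = ‖s - t‖ := by rw [← neg_sub, norm_neg]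
      have : C * ‖s - t‖ < ε := by
        calc C * ‖s - t‖ < C * (ε / C) := by
              exact mul_lt_mul_of_pos_left hs hCpos'
          _ = ε := by field_simp
      rw [abs_sub_lt_iff]
      constructor <;> [skip; rw [hts] at h2] <;> linarith
  -- the objective function
  set f : X → ℝ := fun w => N (fun i => ‖x i - w‖) with hf
  have hf_cont : Continuous f := by
    apply hN_cont.comp
    exact continuous_pi fun i => (continuous_const.sub continuous_id).norm
  have hf_nonneg : ∀ w, 0 ≤ f w := fun w => hN_nonneg _
  -- f is convex
  have hf_convex : ∀ c : ℝ, Convex ℝ {w : X | f w ≤ c} := by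
    intro c
    intro w₁ hw₁ w₂ hw₂ a b ha hb hab
    simp only [Set.mem_setOf_eq] at hw₁ hw₂ ⊢
    have step1 : f (a • w₁ + b • w₂) ≤
        N (fun i => a * ‖x i - w₁‖ + b * ‖x i - w₂‖) := by
      apply hN_mono
      intro i
      have hx : x i - (a • w₁ + b • w₂) = a • (x i - w₁) + b • (x i - w₂) := by
        have h1 : a • (x i - w₁) + b • (x i - w₂)
            = (a + b) • x i - (a • w₁ + b • w₂) := by
          rw [smul_sub, smul_sub, add_smul]; abel
        rw [h1, hab, one_smul]
      have hnn : 0 ≤ a * ‖x i - w₁‖ + b * ‖x i - w₂‖ := by positivity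
      rw [abs_of_nonneg (norm_nonneg _), abs_of_nonneg hnn, hx]
      calc ‖a • (x i - w₁) + b • (x i - w₂)‖
          ≤ ‖a • (x i - w₁)‖ + ‖b • (x i - w₂)‖ := norm_add_le _ _
        _ = a * ‖x i - w₁‖ + b * ‖x i - w₂‖ := by
            rw [norm_smul, norm_smul, Real.norm_eq_abs, Real.norm_eq_abs,
              abs_of_nonneg ha, abs_of_nonneg hb]
    have step2 : N (fun i => a * ‖x i - w₁‖ + b * ‖x i - w₂‖) ≤
        a * f w₁ + b * f w₂ := by
      have heq : (fun i => a * ‖x i - w₁‖ + b * ‖x i - w₂‖) =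
          (a • fun i => ‖x i - w₁‖) + (b • fun i => ‖x i - w₂‖) := by
        ext i; simp
      rw [heq]
      calc N ((a • fun i => ‖x i - w₁‖) + (b • fun i => ‖x i - w₂‖))
          ≤ N (a • fun i => ‖x i - w₁‖) + N (b • fun i => ‖x i - w₂‖) :=
            hN_add _ _
        _ = a * f w₁ + b * f w₂ := by
            rw [hN_smul, hN_smul, abs_of_nonneg ha, abs_of_nonneg hb]
    calc f (a • w₁ + b • w₂) ≤ a * f w₁ + b * f w₂ := step1.trans step2
      _ ≤ a * c + b * c := by
          apply add_le_add <;> apply mul_le_mul_of_nonneg_left <;> assumption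
      _ = c := by rw [← add_mul, hab, one_mul]
  -- sublevel sets are weakly closed
  have hsub_closed : ∀ c : ℝ, IsClosed (e '' {w : X | f w ≤ c}) := by
    intro c
    have hcl : IsClosed {w : X | f w ≤ c} := isClosed_le hf_cont continuous_const
    have := (hf_convex c).toWeakSpace_closure (𝕜 := ℝ)
    rw [hcl.closure_eq] at this
    rw [this]
    exact isClosed_closure
  -- the infimum
  have himg_ne : (f '' W).Nonempty := hW_ne.image f
  have himg_bdd : BddBelow (f '' W) := ⟨0, by rintro _ ⟨w, -, rfl⟩; exact hf_nonneg w⟩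
  set m : ℝ := sInf (f '' W) with hm
  -- apply compactness with the sequence of closed sublevel sets
  set t : ℕ → Set (WeakSpace ℝ X) :=
    fun k => e '' {w : X | f w ≤ m + 1 / (k + 1)} with ht
  have htc : ∀ k, IsClosed (t k) := fun k => hsub_closed _
  have hfin : ∀ u : Finset ℕ, ((e '' W) ∩ ⋂ k ∈ u, t k).Nonempty := by
    intro u
    rcases u.eq_empty_or_nonempty with rfl | hu
    · simpa using hW_ne.image e
    · obtain ⟨k₀, hk₀mem, hk₀⟩ := u.exists_max_image id hu
      have hpos : (0 : ℝ) < 1 / (k₀ + 1) := by positivity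
      obtain ⟨_, ⟨w, hwW, rfl⟩, hwlt⟩ := Real.lt_sInf_add_pos himg_ne hpos
      refine ⟨e w, ⟨Set.mem_image_of_mem e hwW, ?_⟩⟩
      simp only [Set.mem_iInter]
      intro k hk
      refine Set.mem_image_of_mem e ?_
      have hle : (1 : ℝ) / (k₀ + 1) ≤ 1 / (k + 1) := by
        apply one_div_le_one_div_of_le (by positivity)
        exact_mod_cast Nat.add_le_add_right (hk₀ k hk) 1
      exact le_trans hwlt.le (by linarith)
  obtain ⟨y, hyK, hyT⟩ := hW.inter_iInter_nonempty t htc hfin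
  obtain ⟨w₀, hw₀W, rfl⟩ := hyK
  refine ⟨w₀, hw₀W, fun w hwW => ?_⟩
  -- f w₀ ≤ m
  have hfw₀ : f w₀ ≤ m := by
    by_contra hcon
    push_neg at hcon
    obtain ⟨k, hk⟩ := exists_nat_one_div_lt (by linarith : (0:ℝ) < f w₀ - m)
    have hyk := Set.mem_iInter.mp hyT k
    obtain ⟨w', hw', hww'⟩ := hyk
    have : w' = w₀ := e.injective hww'
    rw [this] at hw'
    simp only [Set.mem_setOf_eq] at hw'
    linarith
  exact hfw₀.trans (csInf_le himg_bdd ⟨w, hwW, rfl⟩)
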